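/- arXiv:2103.11977 — 6 statements merged into one kernel-verified Lean document; each statement's English description precedes it below -/
import Mathlib

section
/- Let F be a field, G a group, n ≥ 2, and suppose UT_n^(-) carries a G-grading in which every diagonal matrix unit e_{11}, …, e_{nn} is semihomogeneous. Then for all 1 ≤ i < j ≤ n the matrix unit e_{ij} is homogeneous in the grading. -/
lemma key_bracket {F : Type*} [Field F] {n : ℕ} {i j : Fin n} (hij : i < j) (c c' : F)
    (x : Matrix (Fin n) (Fin n) F) (hx : ∀ a b : Fin n, b < a → x a b = 0) :
    ⁅⁅x, Matrix.single i i 1 - c • (1 : Matrix (Fin n) (Fin n) F)⁆,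
      Matrix.single j j 1 - c' • (1 : Matrix (Fin n) (Fin n) F)⁆
      = (-(x i j)) • Matrix.single i j (1 : F) := by
  have hc : ∀ (y z : Matrix (Fin n) (Fin n) F) (c : F), ⁅y, z - c • 1⁆ = ⁅y, z⁆ := by
    intro y z c
    simp only [Ring.lie_def, Matrix.mul_sub, Matrix.sub_mul, Matrix.mul_smul, Matrix.smul_mul,
      mul_one, one_mul]
    abel
  rw [hc, hc]
  have hne : i ≠ j := hij.ne
  ext a b
  simp only [Ring.lie_def, Matrix.sub_apply, Matrix.mul_apply, Matrix.smul_apply,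
    Matrix.single, Matrix.of_apply, mul_ite, ite_mul, mul_one, mul_zero, zero_mul,
    one_mul, ite_and, Finset.sum_ite_eq, Finset.sum_ite_eq', Finset.mem_univ, if_true,
    smul_eq_mul, Finset.sum_sub_distrib, Finset.sum_ite_irrel, Finset.sum_const_zero]
  by_cases hai : i = a <;> by_cases hbj : j = b <;>
    simp_all [hne, hne.symm, hx j i hij]
  · intro h; exact absurd h.symm hne
  · intro h1 h2; subst h1; subst h2; exact hx _ _ hij

/-- if `UT_n^(-)` carries a `G`-grading in which every diagonal matrix
unit `e_{ii}` is semihomogeneous (homogeneous modulo the center `F·I`), then every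
matrix unit `e_{ij}` with `i < j` is homogeneous. -/
theorem stmt9 (F G : Type*) [Field F] [Group G] (n : ℕ) (hn : 2 ≤ n)
    (U : G → Submodule F (Matrix (Fin n) (Fin n) F))
    (hUT : ∀ g, ∀ x ∈ U g, ∀ i j : Fin n, j < i → x i j = 0)
    (hcover : ∀ x : Matrix (Fin n) (Fin n) F,
      (∀ i j : Fin n, j < i → x i j = 0) → x ∈ ⨆ g, U g)
    (hind : iSupIndep U)
    (hbr : ∀ g h : G, ∀ x ∈ U g, ∀ y ∈ U h, ⁅x, y⁆ ∈ U (g * h))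
    (hsemi : ∀ i : Fin n, ∃ g : G, ∃ c : F,
      Matrix.single i i 1 - c • (1 : Matrix (Fin n) (Fin n) F) ∈ U g) :
    ∀ i j : Fin n, i < j → ∃ g : G, Matrix.single i j 1 ∈ U g := by
  intro i j hij
  obtain ⟨gi, ci, hi⟩ := hsemi i
  obtain ⟨gj, cj, hj⟩ := hsemi j
  have hmem : Matrix.single i j (1 : F) ∈ ⨆ g, U g := by
    apply hcover
    intro a b hba
    rw [Matrix.single]
    simp only [Matrix.of_apply, ite_eq_right_iff, and_imp]
    rintro rfl rfl
    exact absurd hij (not_lt.2 hba.le)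
  rw [Submodule.mem_iSup_iff_exists_finsupp] at hmem
  obtain ⟨f, hf, hsum⟩ := hmem
  have h1 : ∑ g ∈ f.support, (f g) i j = 1 := by
    have := congrArg (fun m : Matrix (Fin n) (Fin n) F => m i j) hsum
    simpa [Finsupp.sum, Matrix.sum_apply, Matrix.single] using this
  have h2 : ∃ g ∈ f.support, (f g) i j ≠ 0 :=
    Finset.exists_ne_zero_of_sum_ne_zero (h1 ▸ one_ne_zero)
  obtain ⟨g, -, hg⟩ := h2
  refine ⟨g * gi * gj, ?_⟩
  have b1 := hbr g gi (f g) (hf g) _ hi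
  have b2 := hbr (g * gi) gj _ b1 _ hj
  rw [key_bracket hij ci cj (f g) (hUT g (f g) (hf g))] at b2
  have := Submodule.smul_mem (U (g * gi * gj)) (-(f g i j))⁻¹ b2
  rwa [smul_smul, inv_mul_cancel₀ (by simpa using hg), one_smul] at this
end

section
/- Let F be a field, G a group, n ≥ 2, and suppose UT_n^(-) carries a G-grading in which each matrix unit e_{i,i+1} (1 ≤ i ≤ n−1) is homogeneous of degree g_i and each e_{ii} is homogeneous. Then deg e_{ii} = 1 for every i, and the elements g_1, …, g_{n−1} commute pairwise. -/
private def prodFrom {G : Type*} [Group G] (g : ℕ → G) (i : ℕ) : ℕ → G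
  | 0 => g i
  | m+1 => prodFrom g i m * g (i + m + 1)

private lemma prodFrom_cons {G : Type*} [Group G] (g : ℕ → G) (i : ℕ) :
    ∀ m, prodFrom g i (m+1) = g i * prodFrom g (i+1) m := by
  intro m
  induction m with
  | zero => simp [prodFrom]
  | succ m ih =>
      have e : i+(m+1)+1 = (i+1)+m+1 := by omega
      rw [show prodFrom g i (m+1+1) = prodFrom g i (m+1) * g (i+(m+1)+1) from rfl, ih,
        show prodFrom g (i+1) (m+1) = prodFrom g (i+1) m * g ((i+1)+m+1) from rfl,
        mul_assoc, e]

/-- if `UT_n^(-)` carries a `G`-grading in which each `e_{i,i+1}` is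
homogeneous of degree `g_i` and each `e_{ii}` is homogeneous, then `deg e_{ii} = 1`
for every `i` and the elements `g_1, …, g_{n−1}` commute pairwise. -/
theorem stmt10 (F G : Type*) [Field F] [Group G] (n : ℕ) (hn : 2 ≤ n)
    (U : G → Submodule F (Matrix (Fin n) (Fin n) F))
    (hUT : ∀ g, ∀ x ∈ U g, ∀ i j : Fin n, j < i → x i j = 0)
    (hcover : ∀ x : Matrix (Fin n) (Fin n) F,
      (∀ i j : Fin n, j < i → x i j = 0) → x ∈ ⨆ g, U g)
    (hind : iSupIndep U)
    (hbr : ∀ g h : G, ∀ x ∈ U g, ∀ y ∈ U h, ⁅x, y⁆ ∈ U (g * h))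
    (d : Fin n → G)
    (hd : ∀ i : Fin n, Matrix.single i i 1 ∈ U (d i))
    (g : ℕ → G)
    (hg : ∀ (i : ℕ) (h : i + 1 < n),
      Matrix.single (⟨i, by omega⟩ : Fin n) (⟨i + 1, h⟩ : Fin n) 1 ∈ U (g i)) :
    (∀ i : Fin n, d i = 1)
      ∧ ∀ i j : ℕ, i + 1 < n → j + 1 < n → g i * g j = g j * g i := by
  -- basic facts
  have hne : ∀ a b : Fin n, Matrix.single a b (1:F) ≠ 0 := by
    intro a b h
    have := congrFun (congrFun h a) b
    simp [Matrix.single_apply_same] at this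
  have hdeg : ∀ (a b : G) (x : Matrix (Fin n) (Fin n) F),
      x ∈ U a → x ∈ U b → x ≠ 0 → a = b := by
    intro a b x ha hb hx
    by_contra hab
    have hle : U b ≤ ⨆ j, ⨆ _ : j ≠ a, U j :=
      le_iSup₂ (f := fun j (_ : j ≠ a) => U j) b (Ne.symm hab)
    exact hx (Submodule.disjoint_def.mp ((hind a).mono_right hle) x ha hb)
  have hlie : ∀ a b c : Fin n, a ≠ c →
      ⁅Matrix.single a b (1:F), Matrix.single b c (1:F)⁆
        = Matrix.single a c (1:F) := by
    intro a b c hac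
    rw [LieRing.of_associative_ring_bracket, Matrix.single_mul_single_same, one_mul,
      Matrix.single_mul_single_of_ne (h := Ne.symm hac), sub_zero]
  -- chains e_{i, i+m+1}
  have hEchain : ∀ m i (h : i + m + 1 < n),
      Matrix.single (⟨i, by omega⟩ : Fin n) (⟨i + m + 1, h⟩ : Fin n) 1
        ∈ U (prodFrom g i m) := by
    intro m
    induction m with
    | zero => intro i h; exact hg i h
    | succ m ih =>
        intro i h
        have h1 : i + m + 1 < n := by omega
        have hm := ih i h1
        have hg' := hg (i+m+1) (show i+m+1+1 < n by omega)
        have hb := hbr _ _ _ hm _ hg'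
        rw [hlie _ _ _ (by simp [Fin.ext_iff]; omega)] at hb
        exact hb
  -- g_{i+m+1} commutes with the product g_i ⋯ g_{i+m}
  have hcomm : ∀ m i, i + m + 2 < n →
      g (i+m+1) * prodFrom g i m = prodFrom g i m * g (i+m+1) := by
    intro m i h
    have hx := hEchain (m+1) i (by omega)
    have hj := hg (i+m+1) (show i+m+1+1 < n by omega)
    have hm := hEchain m i (by omega)
    have hb := hbr _ _ _ hj _ hm
    have hsk : ⁅Matrix.single (⟨i+m+1, by omega⟩ : Fin n) (⟨i+m+1+1, by omega⟩ : Fin n) (1:F),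
        Matrix.single (⟨i, by omega⟩ : Fin n) (⟨i+m+1, by omega⟩ : Fin n) (1:F)⁆
        = -(Matrix.single (⟨i, by omega⟩ : Fin n) (⟨i+(m+1)+1, by omega⟩ : Fin n) (1:F)) := by
      rw [show ∀ a b : Matrix (Fin n) (Fin n) F, ⁅a, b⁆ = -⁅b, a⁆ from fun a b => by simp only [Ring.lie_def, neg_sub], hlie _ _ _ (by simp [Fin.ext_iff]; omega)]
      rfl
    rw [hsk] at hb
    rw [show prodFrom g i (m+1) = prodFrom g i m * g (i+m+1) from rfl] at hx
    exact hdeg _ _ _ hb (Submodule.neg_mem _ hx) (neg_ne_zero.mpr (hne _ _))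
  -- key commutativity for i < j
  have key : ∀ i j, i < j → j + 1 < n → g i * g j = g j * g i := by
    intro i j hij hjn
    obtain ⟨m, rfl⟩ : ∃ m, j = i + m + 1 := ⟨j - i - 1, by omega⟩
    cases m with
    | zero => simpa [prodFrom] using (hcomm 0 i (by omega)).symm
    | succ k =>
        have h1 := hcomm (k+1) i (by omega)
        have h2 := hcomm k (i+1) (by omega)
        have e : (i+1)+k+1 = i+(k+1)+1 := by omega
        rw [e] at h2
        rw [prodFrom_cons] at h1
        have key2 : g (i+(k+1)+1) * g i * prodFrom g (i+1) k
            = g i * g (i+(k+1)+1) * prodFrom g (i+1) k := by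
          rw [mul_assoc, h1, mul_assoc, ← h2, ← mul_assoc]
        exact (mul_right_cancel key2).symm
  refine ⟨?_, ?_⟩
  · intro i
    by_cases hi : (i : ℕ) + 1 < n
    · have h2 := hg i hi
      rw [show (⟨(i:ℕ), by omega⟩ : Fin n) = i from Fin.ext rfl] at h2
      have hb := hbr _ _ _ (hd i) _ h2
      rw [hlie _ _ _ (by simp [Fin.ext_iff])] at hb
      have := hdeg _ _ _ hb h2 (hne _ _)
      exact mul_right_cancel (a := d i) (b := g (i:ℕ)) (by rw [one_mul]; exact this)
    · have hi' : (i : ℕ) = n - 1 := by have := i.isLt; omega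
      have hjn : (n-2) + 1 < n := by omega
      have hgj := hg (n-2) hjn
      have hfix : (⟨(n-2)+1, hjn⟩ : Fin n) = i := Fin.ext (by simp [hi']; omega)
      rw [hfix] at hgj
      have hb := hbr _ _ _ hgj _ (hd i)
      rw [hlie _ _ _ (by simp [Fin.ext_iff]; omega)] at hb
      have := hdeg _ _ _ hb hgj (hne _ _)
      exact mul_left_cancel (a := g (n-2)) (by rw [mul_one]; exact this)
  · intro i j hi hj
    rcases lt_trichotomy i j with h | h | h
    · exact key i j h hj
    · rw [h]
    · exact (key j i h hi).symm
end

section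
/- Let F be a field, n ≥ 2, and let I₁ = {x ∈ UT_n : x_{ij} = 0 whenever i ≠ 1} and J the strictly upper triangular matrices. Then I₁ ∩ J is a Lie ideal of UT_n^(-), and for any r ∈ J, the image of the map (ad(e_{11}+r))^n : UT_n^(-) → UT_n^(-) equals I₁ ∩ J, where ad(x)(a) = [x,a]. -/
section Aux
variable {F : Type*} [Field F] {n : ℕ}

private lemma aux_pow (r : Matrix (Fin n) (Fin n) F)
    (hr : ∀ i j : Fin n, (j : ℕ) ≤ (i : ℕ) → r i j = 0) :
    ∀ k (i j : Fin n), (j : ℕ) < (i : ℕ) + k → (r ^ k) i j = 0 := by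
  intro k
  induction k with
  | zero =>
    intro i j hij
    simp only [pow_zero]
    exact Matrix.one_apply_ne (by intro h; subst h; omega)
  | succ k ih =>
    intro i j hij
    rw [pow_succ, Matrix.mul_apply]
    refine Finset.sum_eq_zero fun m _ => ?_
    by_cases hm : (m : ℕ) < (i : ℕ) + k
    · rw [ih i m hm, zero_mul]
    · rw [hr m j (by omega), mul_zero]

private lemma aux_upper_mul (a b : Matrix (Fin n) (Fin n) F)
    (ha : ∀ i j : Fin n, (j : ℕ) < (i : ℕ) → a i j = 0)
    (hb : ∀ i j : Fin n, (j : ℕ) < (i : ℕ) → b i j = 0) :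
    ∀ i j : Fin n, (j : ℕ) < (i : ℕ) → (a * b) i j = 0 := by
  intro i j hij
  rw [Matrix.mul_apply]
  refine Finset.sum_eq_zero fun m _ => ?_
  by_cases hm : (m : ℕ) < (i : ℕ)
  · rw [ha i m hm, zero_mul]
  · rw [hb m j (by omega), mul_zero]

private lemma aux_upper_pow (a : Matrix (Fin n) (Fin n) F)
    (ha : ∀ i j : Fin n, (j : ℕ) < (i : ℕ) → a i j = 0) :
    ∀ k, ∀ i j : Fin n, (j : ℕ) < (i : ℕ) → (a ^ k) i j = 0 := by
  intro k
  induction k with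
  | zero => intro i j hij; exact Matrix.one_apply_ne (by intro h; subst h; omega)
  | succ k ih => rw [pow_succ]; exact aux_upper_mul _ _ ih ha

private lemma aux_S_mul (x m : Matrix (Fin n) (Fin n) F)
    (hx : ∀ i j : Fin n, ¬((i : ℕ) = 0 ∧ (i : ℕ) < (j : ℕ)) → x i j = 0)
    (hm : ∀ i j : Fin n, (j : ℕ) < (i : ℕ) → m i j = 0) :
    ∀ i j : Fin n, ¬((i : ℕ) = 0 ∧ (i : ℕ) < (j : ℕ)) → (x * m) i j = 0 := by
  intro i j hij
  rw [Matrix.mul_apply]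
  refine Finset.sum_eq_zero fun k _ => ?_
  by_cases hi : (i : ℕ) = 0
  · have hj : (j : ℕ) = 0 := by omega
    by_cases hk : (k : ℕ) = 0
    · rw [hx i k (by omega), zero_mul]
    · rw [hm k j (by omega), mul_zero]
  · rw [hx i k (by omega), zero_mul]

private lemma aux_step (E r a : Matrix (Fin n) (Fin n) F)
    (hE : ∀ i j : Fin n, E i j = if (i : ℕ) = 0 ∧ (j : ℕ) = 0 then 1 else 0)
    (hr : ∀ i j : Fin n, (j : ℕ) ≤ (i : ℕ) → r i j = 0) (k : ℕ)
    (ha : ∀ i j : Fin n,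
      ¬(((i : ℕ) = 0 ∧ (i : ℕ) < (j : ℕ)) ∨ (i : ℕ) + k ≤ (j : ℕ)) → a i j = 0) :
    ∀ i j : Fin n,
      ¬(((i : ℕ) = 0 ∧ (i : ℕ) < (j : ℕ)) ∨ (i : ℕ) + (k + 1) ≤ (j : ℕ)) →
        ⁅E + r, a⁆ i j = 0 := by
  intro i j h
  push_neg at h
  obtain ⟨h1, h2⟩ := h
  simp only [Ring.lie_def, Matrix.sub_apply, Matrix.mul_apply, Matrix.add_apply]
  by_cases hi : (i : ℕ) = 0
  · have hj : j = i := Fin.ext (by omega)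
    rw [hj]
    have hA : ∑ m, (E i m + r i m) * a m i = (E i i + r i i) * a i i := by
      refine Finset.sum_eq_single i (fun m _ hm => ?_) (by simp)
      have hm0 : (m : ℕ) ≠ 0 := fun hh => hm (Fin.ext (by omega))
      rw [ha m i (by omega), mul_zero]
    have hB : ∑ m, a i m * (E m i + r m i) = a i i * (E i i + r i i) := by
      refine Finset.sum_eq_single i (fun m _ hm => ?_) (by simp)
      have hm0 : (m : ℕ) ≠ 0 := fun hh => hm (Fin.ext (by omega))
      rw [hE, if_neg (by omega), hr m i (by omega), add_zero, mul_zero]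
    rw [hA, hB]
    ring
  · have hA : ∑ m, (E i m + r i m) * a m j = 0 := by
      refine Finset.sum_eq_zero fun m _ => ?_
      rw [hE, if_neg (by omega), zero_add]
      by_cases him : (i : ℕ) < (m : ℕ)
      · rw [ha m j (by omega), mul_zero]
      · rw [hr i m (by omega), zero_mul]
    have hB : ∑ m, a i m * (E m j + r m j) = 0 := by
      refine Finset.sum_eq_zero fun m _ => ?_
      by_cases hik : (i : ℕ) + k ≤ (m : ℕ)
      · rw [hE, if_neg (by omega), hr m j (by omega), add_zero, mul_zero]
      · rw [ha i m (by omega), zero_mul]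
    rw [hA, hB, sub_zero]

private lemma aux_D_on_S (E r x : Matrix (Fin n) (Fin n) F)
    (hE : ∀ i j : Fin n, E i j = if (i : ℕ) = 0 ∧ (j : ℕ) = 0 then 1 else 0)
    (hr : ∀ i j : Fin n, (j : ℕ) ≤ (i : ℕ) → r i j = 0)
    (hx : ∀ i j : Fin n, ¬((i : ℕ) = 0 ∧ (i : ℕ) < (j : ℕ)) → x i j = 0) :
    ⁅E + r, x⁆ = x * (1 - r) := by
  ext i j
  simp only [Ring.lie_def, Matrix.sub_apply, Matrix.mul_apply, Matrix.add_apply,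
    Matrix.one_apply]
  have h1 : ∑ m, (E i m + r i m) * x m j = x i j := by
    by_cases hi : (i : ℕ) = 0
    · refine Finset.sum_eq_single i (fun m _ hm => ?_) (by simp) |>.trans ?_
      · have hm0 : (m : ℕ) ≠ 0 := fun hh => hm (Fin.ext (by omega))
        rw [hx m j (by omega), mul_zero]
      · rw [hE, if_pos (by omega), hr i i (le_refl _), add_zero, one_mul]
    · rw [hx i j (by omega)]
      refine Finset.sum_eq_zero fun m _ => ?_
      by_cases hm0 : (m : ℕ) = 0
      · rw [hE, if_neg (by omega), zero_add, hr i m (by omega), zero_mul]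
      · rw [hx m j (by omega), mul_zero]
  have h2 : ∑ m, x i m * (E m j + r m j) = ∑ m, x i m * r m j := by
    refine Finset.sum_congr rfl fun m _ => ?_
    by_cases hm0 : (m : ℕ) = 0
    · rw [hx i m (by omega), zero_mul, zero_mul]
    · rw [hE, if_neg (by omega), zero_add]
  have h3 : ∑ m, x i m * ((if m = j then (1 : F) else 0) - r m j)
      = x i j - ∑ m, x i m * r m j := by
    simp [mul_sub, Finset.sum_sub_distrib, mul_ite, mul_one, mul_zero, Finset.sum_ite_eq']
  rw [h1, h2, h3]

private lemma aux_iter (E r : Matrix (Fin n) (Fin n) F)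
    (hE : ∀ i j : Fin n, E i j = if (i : ℕ) = 0 ∧ (j : ℕ) = 0 then 1 else 0)
    (hr : ∀ i j : Fin n, (j : ℕ) ≤ (i : ℕ) → r i j = 0) :
    ∀ k (x : Matrix (Fin n) (Fin n) F),
      (∀ i j : Fin n, ¬((i : ℕ) = 0 ∧ (i : ℕ) < (j : ℕ)) → x i j = 0) →
      (∀ i j : Fin n, ¬((i : ℕ) = 0 ∧ (i : ℕ) < (j : ℕ)) →
        ((fun a => ⁅E + r, a⁆)^[k] x) i j = 0)
      ∧ (fun a => ⁅E + r, a⁆)^[k] x = x * (1 - r) ^ k := by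
  have hur : ∀ i j : Fin n, (j : ℕ) < (i : ℕ) → (1 - r) i j = 0 := by
    intro i j hij
    rw [Matrix.sub_apply, hr i j (by omega), Matrix.one_apply_ne (by intro h; subst h; omega),
      sub_zero]
  intro k
  induction k with
  | zero => intro x hx; exact ⟨by simpa using hx, by simp⟩
  | succ k ih =>
    intro x hx
    obtain ⟨ihS, ihEq⟩ := ih x hx
    rw [Function.iterate_succ_apply']
    have hD := aux_D_on_S E r _ hE hr ihS
    constructor
    · intro i j hij
      rw [hD]
      exact aux_S_mul _ _ ihS hur i j hij
    · rw [hD, ihEq, pow_succ, mul_assoc]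
end Aux

/-- the set `I₁ ∩ J` of matrices supported on the first row strictly
above the diagonal is a Lie ideal of `UT_n^(-)`, and for any strictly upper
triangular `r`, the image of `(ad(e_{11}+r))^n` on `UT_n^(-)` equals `I₁ ∩ J`. -/
theorem stmt15 (F : Type*) [Field F] (n : ℕ) (hn : 2 ≤ n) :
    let S : Set (Matrix (Fin n) (Fin n) F) :=
      {x | ∀ i j : Fin n, ¬((i : ℕ) = 0 ∧ i < j) → x i j = 0}
    ((0 : Matrix (Fin n) (Fin n) F) ∈ S)
      ∧ (∀ x ∈ S, ∀ y ∈ S, x + y ∈ S)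
      ∧ (∀ c : F, ∀ x ∈ S, c • x ∈ S)
      ∧ (∀ a : Matrix (Fin n) (Fin n) F, (∀ i j : Fin n, j < i → a i j = 0) →
          ∀ x ∈ S, ⁅a, x⁆ ∈ S)
      ∧ ∀ r : Matrix (Fin n) (Fin n) F, (∀ i j : Fin n, j ≤ i → r i j = 0) →
          ∀ y : Matrix (Fin n) (Fin n) F,
            (y ∈ S ↔ ∃ x : Matrix (Fin n) (Fin n) F,
              (∀ i j : Fin n, j < i → x i j = 0) ∧
              (fun a => ⁅Matrix.single (⟨0, by omega⟩ : Fin n)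
                  (⟨0, by omega⟩ : Fin n) (1 : F) + r, a⁆)^[n] x = y) := by
  intro S
  have hmem : ∀ x : Matrix (Fin n) (Fin n) F,
      x ∈ S ↔ ∀ i j : Fin n, ¬((i : ℕ) = 0 ∧ (i : ℕ) < (j : ℕ)) → x i j = 0 := by
    intro x
    constructor
    · intro h i j hij; exact h i j fun hc => hij ⟨hc.1, Fin.lt_def.mp hc.2⟩
    · intro h i j hij; exact h i j fun hc => hij ⟨hc.1, Fin.lt_def.mpr hc.2⟩
  refine ⟨fun i j _ => rfl, ?_, ?_, ?_, ?_⟩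
  · intro x hx y hy i j hij
    rw [Matrix.add_apply, hx i j hij, hy i j hij, add_zero]
  · intro c x hx i j hij
    rw [Matrix.smul_apply, hx i j hij, smul_zero]
  · -- Lie ideal property
    intro a ha x hx
    rw [hmem] at hx ⊢
    intro i j hij
    simp only [Ring.lie_def, Matrix.sub_apply, Matrix.mul_apply]
    have hA : ∑ m, a i m * x m j = 0 := by
      refine Finset.sum_eq_zero fun m _ => ?_
      by_cases hm0 : (m : ℕ) = 0
      · by_cases hi : (i : ℕ) = 0
        · rw [hx m j (by omega), mul_zero]
        · rw [ha i m (by rw [Fin.lt_def]; omega), zero_mul]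
      · rw [hx m j (by omega), mul_zero]
    have hB : ∑ m, x i m * a m j = 0 := by
      refine Finset.sum_eq_zero fun m _ => ?_
      by_cases hm0 : (m : ℕ) = 0
      · rw [hx i m (by omega), zero_mul]
      · by_cases hi : (i : ℕ) = 0
        · rw [ha m j (by rw [Fin.lt_def]; omega), mul_zero]
        · rw [hx i m (by omega), zero_mul]
    rw [hA, hB, sub_zero]
  · intro r hr y
    set E : Matrix (Fin n) (Fin n) F :=
      Matrix.single (⟨0, by omega⟩ : Fin n) (⟨0, by omega⟩ : Fin n) (1 : F) with hEdef
    have hE : ∀ i j : Fin n, E i j = if (i : ℕ) = 0 ∧ (j : ℕ) = 0 then 1 else 0 := by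
      intro i j
      simp only [hEdef, Matrix.single, Matrix.of_apply]
      congr 1
      simp [Fin.ext_iff, eq_comm]
    have hr' : ∀ i j : Fin n, (j : ℕ) ≤ (i : ℕ) → r i j = 0 := by
      intro i j hij; exact hr i j (by rwa [Fin.le_def])
    constructor
    · -- backward: y ∈ S → ∃ x
      intro hy
      rw [hmem] at hy
      set u : Matrix (Fin n) (Fin n) F := ∑ k ∈ Finset.range n, r ^ k with hu
      have hu_up : ∀ i j : Fin n, (j : ℕ) < (i : ℕ) → u i j = 0 := by
        intro i j hij
        rw [hu, Matrix.sum_apply]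
        exact Finset.sum_eq_zero fun k _ => aux_pow r hr' k i j (by omega)
      have hun_up : ∀ i j : Fin n, (j : ℕ) < (i : ℕ) → (u ^ n) i j = 0 :=
        aux_upper_pow u hu_up n
      have hrn : r ^ n = 0 := by
        ext i j
        rw [aux_pow r hr' n i j (by omega), Matrix.zero_apply]
      have huinv : u * (1 - r) = 1 := by
        have hgs := geom_sum_mul r n
        rw [hrn] at hgs
        calc u * (1 - r) = -(u * (r - 1)) := by
              rw [mul_sub, mul_sub, mul_one, neg_sub]
        _ = -((0 : Matrix (Fin n) (Fin n) F) - 1) := by rw [hu, hgs]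
        _ = 1 := by rw [zero_sub, neg_neg]
      have hcomm : Commute u (1 - r) := by
        have hru : Commute r u := Commute.sum_right _ _ _ fun k _ => (Commute.refl r).pow_right k
        exact (Commute.one_right u).sub_right hru.symm
      have hx : ∀ i j : Fin n, ¬((i : ℕ) = 0 ∧ (i : ℕ) < (j : ℕ)) → (y * u ^ n) i j = 0 :=
        aux_S_mul y (u ^ n) hy hun_up
      refine ⟨y * u ^ n, fun i j hij => hx i j (by rw [Fin.lt_def] at hij; omega), ?_⟩
      rw [(aux_iter E r hE hr' n (y * u ^ n) hx).2, mul_assoc, ← hcomm.mul_pow, huinv, one_pow,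
        mul_one]
    · -- forward: image is in S
      rintro ⟨x, hx, hxy⟩
      rw [hmem]
      have hQ : ∀ k : ℕ, ∀ i j : Fin n,
          ¬(((i : ℕ) = 0 ∧ (i : ℕ) < (j : ℕ)) ∨ (i : ℕ) + k ≤ (j : ℕ)) →
          ((fun a => ⁅E + r, a⁆)^[k] x) i j = 0 := by
        intro k
        induction k with
        | zero =>
          intro i j hij
          exact hx i j (by rw [Fin.lt_def]; omega)
        | succ k ih =>
          intro i j hij
          rw [Function.iterate_succ_apply']
          exact aux_step E r _ hE hr' k ih i j hij
      intro i j hij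
      rw [← hxy]
      exact hQ n i j (by have := j.isLt; omega)
end

section
/- Let L₁ and L₂ be G-graded Lie algebras over a field F, and let ψ : L₁ → L₂ be an isomorphism of (ungraded) Lie algebras such that the induced map L₁/z(L₁) → L₂/z(L₂) and the restriction z(L₁) → z(L₂) are both isomorphisms of G-graded vector spaces (where the centers and quotients carry the induced gradings, assumed well-defined). Then L₁ and L₂ are isomorphic as G-graded Lie algebras. -/
/-- if `ψ : L₁ → L₂` is an ungraded Lie algebra isomorphism between
`G`-graded Lie algebras (with graded centers) that restricts to a graded isomorphism
of the centers and induces a graded isomorphism on the central quotients, then `L₁`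
and `L₂` are isomorphic as `G`-graded Lie algebras. -/
theorem stmt17 (F G L₁ L₂ : Type*) [Field F] [Group G] [DecidableEq G]
    [LieRing L₁] [LieAlgebra F L₁] [LieRing L₂] [LieAlgebra F L₂]
    (ℒ₁ : G → Submodule F L₁) (ℒ₂ : G → Submodule F L₂)
    [DirectSum.Decomposition ℒ₁] [DirectSum.Decomposition ℒ₂]
    (hbr₁ : ∀ g h : G, ∀ x ∈ ℒ₁ g, ∀ y ∈ ℒ₁ h, ⁅x, y⁆ ∈ ℒ₁ (g * h))
    (hbr₂ : ∀ g h : G, ∀ x ∈ ℒ₂ g, ∀ y ∈ ℒ₂ h, ⁅x, y⁆ ∈ ℒ₂ (g * h))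
    (hz₁ : ∀ g : G, ∀ x ∈ LieAlgebra.center F L₁,
      (DirectSum.decompose ℒ₁ x g : L₁) ∈ LieAlgebra.center F L₁)
    (hz₂ : ∀ g : G, ∀ x ∈ LieAlgebra.center F L₂,
      (DirectSum.decompose ℒ₂ x g : L₂) ∈ LieAlgebra.center F L₂)
    (ψ : L₁ ≃ₗ⁅F⁆ L₂)
    (hψz : ∀ g : G, ∀ x ∈ LieAlgebra.center F L₁, x ∈ ℒ₁ g → ψ x ∈ ℒ₂ g)
    (hψz' : ∀ g : G, ∀ y ∈ LieAlgebra.center F L₂, y ∈ ℒ₂ g → ψ.symm y ∈ ℒ₁ g)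
    (hψq : ∀ g : G, ∀ x ∈ ℒ₁ g, ∃ z ∈ LieAlgebra.center F L₂, ψ x + z ∈ ℒ₂ g)
    (hψq' : ∀ g : G, ∀ y ∈ ℒ₂ g, ∃ z ∈ LieAlgebra.center F L₁, ψ.symm y + z ∈ ℒ₁ g) :
    ∃ φ : L₁ ≃ₗ⁅F⁆ L₂, ∀ g : G, ∀ x ∈ ℒ₁ g, φ x ∈ ℒ₂ g := by
  classical
  -- the degree-wise component maps
  set f : ∀ g : G, ℒ₁ g →ₗ[F] ℒ₂ g := fun g =>
    { toFun := fun x => DirectSum.decompose ℒ₂ (ψ.toLinearEquiv (x : L₁)) g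
      map_add' := by
        intro a b
        show (DirectSum.decompose ℒ₂ (ψ.toLinearEquiv ((a : L₁) + (b : L₁)))) g = _
        rw [map_add, DirectSum.decompose_add, DirectSum.add_apply]
      map_smul' := by
        intro c a
        show (DirectSum.decompose ℒ₂ (ψ.toLinearEquiv (c • (a : L₁)))) g =
            c • (DirectSum.decompose ℒ₂ (ψ.toLinearEquiv (a : L₁))) g
        rw [map_smul, DirectSum.decompose_smul, DirectSum.smul_apply] } with hf
  set Φ : L₁ →ₗ[F] L₂ :=
    (DirectSum.decomposeLinearEquiv ℒ₂).symm.toLinearMap ∘ₗ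
      (DFinsupp.mapRange.linearMap f) ∘ₗ
        (DirectSum.decomposeLinearEquiv ℒ₁).toLinearMap with hΦ
  -- value on homogeneous elements
  have hΦhom : ∀ g : G, ∀ x ∈ ℒ₁ g,
      Φ x = (DirectSum.decompose ℒ₂ (ψ x) g : L₂) := by
    intro g x hx
    have h1 : DirectSum.decompose ℒ₁ x = DirectSum.of (fun i => ℒ₁ i) g ⟨x, hx⟩ :=
      DirectSum.decompose_of_mem ℒ₁ hx
    have h2 : DFinsupp.mapRange.linearMap f (DirectSum.of (fun i => ℒ₁ i) g ⟨x, hx⟩)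
        = DirectSum.of (fun i => ℒ₂ i) g (f g ⟨x, hx⟩) := by
      show DFinsupp.mapRange (fun i => f i) (fun i => (f i).map_zero)
          (DFinsupp.single g ⟨x, hx⟩) = DFinsupp.single g (f g ⟨x, hx⟩)
      exact DFinsupp.mapRange_single
    have h3 : (DirectSum.decompose ℒ₂).symm
        (DirectSum.of (fun i => ℒ₂ i) g (f g ⟨x, hx⟩)) = (f g ⟨x, hx⟩ : L₂) := by
      rw [← DirectSum.decompose_coe ℒ₂ (f g ⟨x, hx⟩)]
      exact (DirectSum.decompose ℒ₂).symm_apply_apply _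
    have h0 : Φ x = (DirectSum.decompose ℒ₂).symm
        (DFinsupp.mapRange.linearMap f (DirectSum.decompose ℒ₁ x)) := rfl
    rw [h0, h1, h2, h3]
    rfl
  -- Φ maps homogeneous components correctly
  have hΦmem : ∀ g : G, ∀ x ∈ ℒ₁ g, Φ x ∈ ℒ₂ g := by
    intro g x hx
    rw [hΦhom g x hx]
    exact (DirectSum.decompose ℒ₂ (ψ x) g).2
  -- basic additivity facts for ψ
  have ψadd : ∀ a b : L₁, ψ (a + b) = ψ a + ψ b := fun a b => ψ.toLinearEquiv.map_add a b
  have ψsub : ∀ a b : L₁, ψ (a - b) = ψ a - ψ b := fun a b => ψ.toLinearEquiv.map_sub a b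
  have ψzero : ψ (0 : L₁) = 0 := ψ.toLinearEquiv.map_zero
  -- ψ maps the center onto the center
  have hcent : ∀ x : L₁, x ∈ LieAlgebra.center F L₁ ↔ ψ x ∈ LieAlgebra.center F L₂ := by
    intro x
    rw [LieModule.mem_maxTrivSubmodule, LieModule.mem_maxTrivSubmodule]
    constructor
    · intro h y
      have h1 : ψ ⁅ψ.symm y, x⁆ = ⁅ψ (ψ.symm y), ψ x⁆ := ψ.map_lie _ _
      rw [ψ.apply_symm_apply] at h1
      rw [← h1, h (ψ.symm y), ψzero]
    · intro h y
      have h1 : ψ ⁅y, x⁆ = ⁅ψ y, ψ x⁆ := ψ.map_lie _ _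
      have h2 : ψ ⁅y, x⁆ = 0 := by rw [h1, h (ψ y)]
      have := ψ.toLinearEquiv.map_eq_zero_iff.mp h2
      exact this
  -- the difference between Φ and ψ is central
  have hdiff : ∀ x : L₁, Φ x - ψ x ∈ LieAlgebra.center F L₂ := by
    intro x
    refine DirectSum.Decomposition.inductionOn ℒ₁
      (motive := fun x => Φ x - ψ x ∈ LieAlgebra.center F L₂) ?_ ?_ ?_ x
    · show Φ 0 - ψ 0 ∈ LieAlgebra.center F L₂
      rw [map_zero, ψzero, sub_zero]
      exact zero_mem _
    · intro g m
      show Φ (m : L₁) - ψ (m : L₁) ∈ LieAlgebra.center F L₂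
      obtain ⟨z, hzc, hmem⟩ := hψq g (m : L₁) m.2
      have e1 : Φ (m : L₁) = (DirectSum.decompose ℒ₂ (ψ (m : L₁)) g : L₂) := hΦhom g m m.2
      have e2 : ψ (m : L₁) = (ψ (m : L₁) + z) - z := by abel
      have e3 : (DirectSum.decompose ℒ₂ (ψ (m : L₁)) g : L₂)
          = (ψ (m : L₁) + z) - (DirectSum.decompose ℒ₂ z g : L₂) := by
        conv_lhs => rw [e2]
        rw [DirectSum.decompose_sub, DirectSum.sub_apply, Submodule.coe_sub]
        congr 1
        exact DirectSum.decompose_of_mem_same ℒ₂ hmem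
      have e4 : Φ (m : L₁) - ψ (m : L₁) = z - (DirectSum.decompose ℒ₂ z g : L₂) := by
        rw [e1, e3]; abel
      rw [e4]
      exact sub_mem hzc (hz₂ g z hzc)
    · intro a b ha hb
      show Φ (a + b) - ψ (a + b) ∈ LieAlgebra.center F L₂
      have : Φ (a + b) - ψ (a + b) = (Φ a - ψ a) + (Φ b - ψ b) := by
        rw [map_add, ψadd]; abel
      rw [this]
      exact add_mem ha hb
  -- Φ agrees with ψ on the center
  have hBcent : ∀ x ∈ LieAlgebra.center F L₁, Φ x = ψ x := by
    intro x hx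
    have hkey : ∀ g : G, Φ ((DirectSum.decompose ℒ₁ x g : L₁))
        = ψ ((DirectSum.decompose ℒ₁ x g : L₁)) := by
      intro g
      have hxg : ((DirectSum.decompose ℒ₁ x g : L₁)) ∈ ℒ₁ g := (DirectSum.decompose ℒ₁ x g).2
      have hxgc := hz₁ g x hx
      have hψxg : ψ ((DirectSum.decompose ℒ₁ x g : L₁)) ∈ ℒ₂ g := hψz g _ hxgc hxg
      rw [hΦhom g _ hxg]
      exact DirectSum.decompose_of_mem_same ℒ₂ hψxg
    have hx1 : Φ x = ∑ g ∈ DFinsupp.support (DirectSum.decompose ℒ₁ x),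
        Φ ((DirectSum.decompose ℒ₁ x g : L₁)) := by
      conv_lhs => rw [← DirectSum.sum_support_decompose ℒ₁ x]
      exact map_sum Φ _ _
    have hx2 : ψ x = ∑ g ∈ DFinsupp.support (DirectSum.decompose ℒ₁ x),
        ψ ((DirectSum.decompose ℒ₁ x g : L₁)) := by
      conv_lhs => rw [← DirectSum.sum_support_decompose ℒ₁ x]
      exact map_sum ψ.toLinearEquiv _ _
    rw [hx1, hx2]
    exact Finset.sum_congr rfl fun g _ => hkey g
  -- injectivity
  have hinj : Function.Injective Φ := by
    refine (injective_iff_map_eq_zero Φ).mpr ?_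
    intro x hx0
    have h1 : ψ x = -(Φ x - ψ x) := by rw [hx0]; abel
    have h2 : ψ x ∈ LieAlgebra.center F L₂ := by rw [h1]; exact neg_mem (hdiff x)
    have h3 : x ∈ LieAlgebra.center F L₁ := (hcent x).mpr h2
    have h4 : ψ x = 0 := by rw [← hBcent x h3, hx0]
    exact ψ.toLinearEquiv.map_eq_zero_iff.mp h4
  -- surjectivity onto each homogeneous component
  have hsurj_g : ∀ g : G, ∀ y ∈ ℒ₂ g, ∃ x : L₁, Φ x = y := by
    intro g y hy
    obtain ⟨z, hzc, hmem⟩ := hψq' g y hy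
    have hψx₀ : ψ (ψ.symm y + z) = y + ψ z := by rw [ψadd, ψ.apply_symm_apply]
    have hzc₂ : ψ z ∈ LieAlgebra.center F L₂ := (hcent z).mp hzc
    have hΦx₀ : Φ (ψ.symm y + z) = y + (DirectSum.decompose ℒ₂ (ψ z) g : L₂) := by
      rw [hΦhom g _ hmem, hψx₀, DirectSum.decompose_add, DirectSum.add_apply,
        Submodule.coe_add, DirectSum.decompose_of_mem_same ℒ₂ hy]
    have hwc : (DirectSum.decompose ℒ₂ (ψ z) g : L₂) ∈ LieAlgebra.center F L₂ :=
      hz₂ g (ψ z) hzc₂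
    have hwm : (DirectSum.decompose ℒ₂ (ψ z) g : L₂) ∈ ℒ₂ g :=
      (DirectSum.decompose ℒ₂ (ψ z) g).2
    have huc : ψ.symm (DirectSum.decompose ℒ₂ (ψ z) g : L₂) ∈ LieAlgebra.center F L₁ := by
      refine (hcent _).mpr ?_
      rw [ψ.apply_symm_apply]
      exact hwc
    have hΦu : Φ (ψ.symm (DirectSum.decompose ℒ₂ (ψ z) g : L₂))
        = (DirectSum.decompose ℒ₂ (ψ z) g : L₂) := by
      rw [hBcent _ huc, ψ.apply_symm_apply]
    refine ⟨(ψ.symm y + z) - ψ.symm (DirectSum.decompose ℒ₂ (ψ z) g : L₂), ?_⟩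
    rw [map_sub, hΦx₀, hΦu]
    abel
  -- surjectivity
  have hsurj : Function.Surjective Φ := by
    intro y
    have hmem : ∀ w : L₂, w ∈ LinearMap.range Φ := by
      intro w
      rw [← DirectSum.sum_support_decompose ℒ₂ w]
      refine Submodule.sum_mem _ fun g _ => ?_
      obtain ⟨x, hx⟩ := hsurj_g g _ (DirectSum.decompose ℒ₂ w g).2
      exact ⟨x, hx⟩
    exact hmem y
  -- central elements bracket to zero on both sides
  have hzero : ∀ z ∈ LieAlgebra.center F L₂, ∀ c : L₂, ⁅z, c⁆ = 0 ∧ ⁅c, z⁆ = 0 := by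
    intro z hz c
    have h := (LieModule.mem_maxTrivSubmodule F L₂ L₂ z).mp hz
    exact ⟨by rw [← lie_skew, h c, neg_zero], h c⟩
  -- brackets of images
  have hkeybr : ∀ x y : L₁, ⁅Φ x, Φ y⁆ = ψ ⁅x, y⁆ := by
    intro x y
    have e1 : Φ x = ψ x + (Φ x - ψ x) := by abel
    have e2 : Φ y = ψ y + (Φ y - ψ y) := by abel
    rw [e1, e2, lie_add, add_lie, add_lie,
      (hzero _ (hdiff y) _).2, (hzero _ (hdiff x) _).1, (hzero _ (hdiff x) _).1,
      add_zero, add_zero, add_zero, ψ.map_lie]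
  -- Φ is a Lie algebra morphism
  have hlie_hom : ∀ (g : G) (m : (ℒ₁ g)) (y : L₁), Φ ⁅(m : L₁), y⁆ = ⁅Φ (m : L₁), Φ y⁆ := by
    intro g m y
    refine DirectSum.Decomposition.inductionOn ℒ₁
      (motive := fun y => Φ ⁅(m : L₁), y⁆ = ⁅Φ (m : L₁), Φ y⁆) ?_ ?_ ?_ y
    · show Φ ⁅(m : L₁), (0 : L₁)⁆ = ⁅Φ (m : L₁), Φ (0 : L₁)⁆
      simp only [lie_zero, map_zero]
    · intro h n
      show Φ ⁅(m : L₁), (n : L₁)⁆ = ⁅Φ (m : L₁), Φ (n : L₁)⁆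
      have hb₁ : ⁅(m : L₁), (n : L₁)⁆ ∈ ℒ₁ (g * h) := hbr₁ g h _ m.2 _ n.2
      have hb₂ : ⁅Φ (m : L₁), Φ (n : L₁)⁆ ∈ ℒ₂ (g * h) :=
        hbr₂ g h _ (hΦmem g _ m.2) _ (hΦmem h _ n.2)
      rw [hΦhom (g * h) _ hb₁, ← hkeybr]
      exact DirectSum.decompose_of_mem_same ℒ₂ hb₂
    · intro a b ha hb
      show Φ ⁅(m : L₁), a + b⁆ = ⁅Φ (m : L₁), Φ (a + b)⁆
      rw [lie_add, map_add, ha, hb, map_add, lie_add]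
  have hlie : ∀ x y : L₁, Φ ⁅x, y⁆ = ⁅Φ x, Φ y⁆ := by
    intro x y
    refine DirectSum.Decomposition.inductionOn ℒ₁
      (motive := fun x => Φ ⁅x, y⁆ = ⁅Φ x, Φ y⁆) ?_ ?_ ?_ x
    · show Φ ⁅(0 : L₁), y⁆ = ⁅Φ (0 : L₁), Φ y⁆
      simp only [zero_lie, map_zero]
    · intro g m
      exact hlie_hom g m y
    · intro a b ha hb
      show Φ ⁅a + b, y⁆ = ⁅Φ (a + b), Φ y⁆
      rw [add_lie, map_add, ha, hb, map_add, add_lie]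
  -- assemble the graded Lie algebra isomorphism
  let e : L₁ ≃ₗ[F] L₂ := LinearEquiv.ofBijective Φ ⟨hinj, hsurj⟩
  refine ⟨{ toLieHom := { toLinearMap := Φ, map_lie' := fun {x y} => hlie x y }
            invFun := e.symm
            left_inv := e.left_inv
            right_inv := e.right_inv }, ?_⟩
  intro g x hx
  exact hΦmem g x hx
end

section
/- Let F be a field with char F ≠ 2, G a group, n ≥ 2, g ∈ G with g² = 1, and η = (g_1,…,g_{n−1}) a symmetric sequence (g_i = g_{n−i}) of elements commuting with each other and with g. Define X_{ij}^± = e_{ij} ± e_{n−j+1,n−i+1}. Then the assignment deg X_{ij}^{(−1)^{j−i}·±} determined by deg X_{ii}^− = 1, deg X_{ii}^+ = g, deg X_{i,i+1}^− = g_i, deg X_{i,i+1}^+ = g·g_i extends to a consistent G-grading of the Lie algebra UT_n^(-) in which every X_{ij}^± is homogeneous of degree g^{ε} g_i g_{i+1}⋯g_{j−1} for the appropriate ε ∈ {0,1}; in particular it is a G-grading: brackets of components multiply degrees. -/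
/-- The matrix unit `e_{ab}` (0-indexed), or `0` if an index is out of range. -/
def Eij (F : Type*) [Field F] (n a b : ℕ) : Matrix (Fin n) (Fin n) F :=
  if h : a < n ∧ b < n then Matrix.single ⟨a, h.1⟩ ⟨b, h.2⟩ 1 else 0

lemma Eij_mul (F : Type*) [Field F] (n a b c d : ℕ) :
    Eij F n a b * Eij F n c d = if b = c ∧ b < n then Eij F n a d else 0 := by
  unfold Eij
  by_cases h1 : a < n ∧ b < n
  case neg =>
    rw [dif_neg h1, zero_mul]
    split_ifs <;> first | rfl | omega
  rw [dif_pos h1]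
  by_cases h2 : c < n ∧ d < n
  case neg =>
    rw [dif_neg h2, mul_zero]
    split_ifs <;> first | rfl | omega
  rw [dif_pos h2]
  by_cases h3 : b = c
  · subst h3
    rw [if_pos ⟨rfl, h1.2⟩, dif_pos ⟨h1.1, h2.2⟩]
    simpa using Matrix.single_mul_single_same (i := (⟨a, h1.1⟩ : Fin n)) (j := ⟨b, h1.2⟩)
      (c := (1:F)) ⟨d, h2.2⟩ 1
  · rw [if_neg (by tauto)]
    exact Matrix.single_mul_single_of_ne (c := (1:F)) (⟨a, h1.1⟩ : Fin n) (⟨b, h1.2⟩ : Fin n) ⟨c, h2.1⟩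
      (show (⟨b, h1.2⟩ : Fin n) ≠ ⟨c, h2.1⟩ from by simpa [Fin.ext_iff] using h3) 1

/-- `X_{ij}^s = e_{ij} + s e_{n-1-j, n-1-i}`. -/
def Xg (F : Type*) [Field F] (n i j : ℕ) (s : F) : Matrix (Fin n) (Fin n) F :=
  Eij F n i j + s • Eij F n (n - 1 - j) (n - 1 - i)

lemma Xg_key (F : Type*) [Field F] {n i j k l : ℕ} (hi : i < n) (hj : j < n) (hk : k < n)
    (hl : l < n) (s t : F) (hs : s * s = 1) (ht : t * t = 1) :
    ⁅Xg F n i j s, Xg F n k l t⁆ =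
      (if j = k then Xg F n i l (-(s*t)) else 0)
      - (if l = i then Xg F n k j (-(s*t)) else 0)
      + (if j = n - 1 - l then t • Xg F n i (n - 1 - k) (-(s*t)) else 0)
      + (if n - 1 - i = k then s • Xg F n (n - 1 - j) l (-(s*t)) else 0) := by
  have e1 : n - 1 - (n - 1 - k) = k := by omega
  have e2 : n - 1 - (n - 1 - j) = j := by omega
  rw [Ring.lie_def]
  unfold Xg
  rw [e1, e2]
  simp only [add_mul, mul_add, smul_mul_assoc, mul_smul_comm, smul_smul, smul_add, Eij_mul]
  simp only [show (j = k ∧ j < n) = (j = k) from by rw [eq_iff_iff]; omega,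
    show (j = n - 1 - l ∧ j < n) = (j = n - 1 - l) from by rw [eq_iff_iff]; omega,
    show (n - 1 - i = k ∧ n - 1 - i < n) = (n - 1 - i = k) from by rw [eq_iff_iff]; omega,
    show (n - 1 - i = n - 1 - l ∧ n - 1 - i < n) = (l = i) from by rw [eq_iff_iff]; omega,
    show (l = i ∧ l < n) = (l = i) from by rw [eq_iff_iff]; omega,
    show (l = n - 1 - j ∧ l < n) = (j = n - 1 - l) from by rw [eq_iff_iff]; omega,
    show (n - 1 - k = i ∧ n - 1 - k < n) = (n - 1 - i = k) from by rw [eq_iff_iff]; omega,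
    show (n - 1 - k = n - 1 - j ∧ n - 1 - k < n) = (j = k) from by rw [eq_iff_iff]; omega]
  split_ifs <;>
    match_scalars <;>
    first
      | ring1
      | linear_combination (-s) * ht
      | linear_combination (-t) * hs
      | linear_combination s * ht
      | linear_combination t * hs

def dmF {G : Type*} [Group G] (η : ℕ → G) (i d : ℕ) : G :=
  ((List.range d).map (fun k => η (i + k))).prod

lemma dmF_succ {G : Type*} [Group G] (η : ℕ → G) (i d : ℕ) :
    dmF η i (d+1) = dmF η i d * η (i+d) := by
  unfold dmF
  rw [List.range_succ, List.map_append, List.prod_append]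
  simp

lemma dmF_succ' {G : Type*} [Group G] (η : ℕ → G) (i d : ℕ) :
    dmF η i (d+1) = η i * dmF η (i+1) d := by
  unfold dmF
  rw [List.range_succ_eq_map, List.map_cons, List.prod_cons, List.map_map]
  have hfun : ((fun k => η (i+k)) ∘ Nat.succ) = (fun k => η (i+1+k)) := by
    funext k
    simp only [Function.comp]
    congr 1
    omega
  rw [hfun, add_zero]

lemma dmF_commute {G : Type*} [Group G] {η : ℕ → G} {x : G} (hx : ∀ k, Commute x (η k))
    (i d : ℕ) : Commute x (dmF η i d) := by
  apply Commute.list_prod_right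
  intro y hy
  rw [List.mem_map] at hy
  obtain ⟨a, -, rfl⟩ := hy
  exact hx _

lemma dmF_mul {G : Type*} [Group G] (η : ℕ → G) (i a : ℕ) :
    ∀ b, dmF η i a * dmF η (i+a) b = dmF η i (a+b) := by
  intro b
  induction b with
  | zero => simp [dmF]
  | succ b ih =>
    rw [show a + (b+1) = (a+b)+1 from rfl, dmF_succ, dmF_succ, ← mul_assoc, ih]
    have : i + a + b = i + (a + b) := by omega
    rw [this]

lemma dmF_sym {G : Type*} [Group G] (η : ℕ → G) (n : ℕ)
    (hsym : ∀ k : ℕ, k < n - 1 → η k = η (n - 2 - k))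
    (hcomm : ∀ k l : ℕ, η k * η l = η l * η k) :
    ∀ d k, k + d < n → dmF η k d = dmF η (n-1-(k+d)) d := by
  intro d
  induction d with
  | zero => intro k _; rfl
  | succ d ih =>
    intro k hk
    rw [dmF_succ, ih k (by omega), dmF_succ']
    have h1 : η (k+d) = η (n-1-(k+(d+1))) := by
      rw [hsym (k+d) (by omega)]
      congr 1
      omega
    rw [show n-1-(k+(d+1))+1 = n-1-(k+d) from by omega, ← h1]
    exact ((dmF_commute (x := η (k+d)) (fun m => hcomm (k+d) m) (n-1-(k+d)) d).eq).symm

/-- the Type 2 assignment, where (0-indexed)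
`X_{ij}^± = e_{ij} ± e_{n−1−j,n−1−i}` with `deg X_{ij}^- = η_i ⋯ η_{j−1}` and
`deg X_{ij}^+ = g · η_i ⋯ η_{j−1}` (so `deg X_{ii}^- = 1`, `deg X_{ii}^+ = g`,
`deg X_{i,i+1}^- = η_i`, `deg X_{i,i+1}^+ = g·η_i`), gives a consistent `G`-grading
`Γ₂(g, η)` of `UT_n^(-)`: every `X_{ij}^±` is homogeneous, the components span the
upper triangular matrices, and brackets of components multiply degrees. -/
theorem stmt18 (F G : Type*) [Field F] [Group G] (hchar : (2 : F) ≠ 0)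
    (n : ℕ) (hn : 2 ≤ n) (g : G) (hg : g * g = 1)
    (η : ℕ → G)
    (hsym : ∀ k : ℕ, k < n - 1 → η k = η (n - 2 - k))
    (hcomm : ∀ k l : ℕ, η k * η l = η l * η k)
    (hgc : ∀ k : ℕ, g * η k = η k * g) :
    let dm : ℕ → ℕ → G := fun i j => ((List.range (j - i)).map (fun k => η (i + k))).prod
    let U : G → Submodule F (Matrix (Fin n) (Fin n) F) := fun h =>
      Submodule.span F
        ({x | ∃ i j : ℕ, i ≤ j ∧ j < n ∧
            x = Eij F n i j - Eij F n (n - 1 - j) (n - 1 - i) ∧ dm i j = h}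
          ∪ {x | ∃ i j : ℕ, i ≤ j ∧ j < n ∧
            x = Eij F n i j + Eij F n (n - 1 - j) (n - 1 - i) ∧ g * dm i j = h})
    (∀ x : Matrix (Fin n) (Fin n) F,
        (∀ i j : Fin n, j < i → x i j = 0) → x ∈ ⨆ h, U h)
      ∧ ∀ h h' : G, ∀ a ∈ U h, ∀ b ∈ U h', ⁅a, b⁆ ∈ U (h * h') := by
  intro dm U
  have hdm : ∀ i j : ℕ, dm i j = dmF η i (j - i) := fun _ _ => rfl
  -- basic degree lemmas
  have Hmul : ∀ a b c : ℕ, a ≤ b → b ≤ c → dm a b * dm b c = dm a c := by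
    intro a b c h1 h2
    rw [hdm, hdm, hdm]
    have := dmF_mul η a (b-a) (c-b)
    rw [show a + (b-a) = b from by omega] at this
    rw [show (b-a) + (c-b) = c-a from by omega] at this
    exact this
  have Hsym : ∀ a b : ℕ, a ≤ b → b < n → dm a b = dm (n-1-b) (n-1-a) := by
    intro a b h1 h2
    rw [hdm, hdm]
    have := dmF_sym η n hsym hcomm (b-a) a (by omega)
    rw [show a + (b-a) = b from by omega] at this
    rw [this]
    congr 1
    omega
  have cg : ∀ a b : ℕ, Commute g (dm a b) := by
    intro a b
    rw [hdm]
    exact dmF_commute (fun k => hgc k) a (b-a)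
  have cdd : ∀ a b c d : ℕ, Commute (dm a b) (dm c d) := by
    intro a b c d
    rw [hdm, hdm]
    exact dmF_commute (x := dmF η a (b-a))
      (fun k => (dmF_commute (x := η k) (fun m => hcomm k m) a (b-a)).symm) c (d-c)
  have Hcg : ∀ a b : ℕ, g * dm a b = dm a b * g := fun a b => (cg a b).eq
  have TMG : ∀ a b c : ℕ, a ≤ b → b ≤ c → dm a b * (g * dm b c) = g * dm a c := by
    intro a b c h1 h2
    rw [← mul_assoc, ← Hcg a b, mul_assoc, Hmul a b c h1 h2]
  have TGM : ∀ a b c : ℕ, a ≤ b → b ≤ c → (g * dm a b) * dm b c = g * dm a c := by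
    intro a b c h1 h2
    rw [mul_assoc, Hmul a b c h1 h2]
  have TGG : ∀ a b c : ℕ, a ≤ b → b ≤ c → (g * dm a b) * (g * dm b c) = dm a c := by
    intro a b c h1 h2
    rw [mul_assoc, TMG a b c h1 h2, ← mul_assoc, hg, one_mul]
  have Hcd : ∀ a b c d : ℕ, dm a b * dm c d = dm c d * dm a b := fun a b c d => (cdd a b c d).eq
  have SMG : ∀ a b c d : ℕ, dm a b * (g * dm c d) = (g * dm c d) * dm a b := by
    intro a b c d
    exact (((cg a b).symm).mul_right (cdd a b c d)).eq
  have SGM : ∀ a b c d : ℕ, (g * dm a b) * dm c d = dm c d * (g * dm a b) :=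
    fun a b c d => (SMG c d a b).symm
  have SGG : ∀ a b c d : ℕ, (g * dm a b) * (g * dm c d) = (g * dm c d) * (g * dm a b) := by
    intro a b c d
    exact (Commute.mul_left ((Commute.refl g).mul_right (cg c d))
      (((cg a b).symm).mul_right (cdd a b c d))).eq
  -- membership helpers
  have memU : ∀ (a b : ℕ), a ≤ b → b < n → ∀ c : G, dm a b = c →
      (Eij F n a b - Eij F n (n-1-b) (n-1-a)) ∈ U c := by
    intro a b hab hbn c hc
    exact Submodule.subset_span (Or.inl ⟨a, b, hab, hbn, rfl, hc⟩)
  have memU' : ∀ (a b : ℕ), a ≤ b → b < n → ∀ c : G, g * dm a b = c →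
      (Eij F n a b + Eij F n (n-1-b) (n-1-a)) ∈ U c := by
    intro a b hab hbn c hc
    exact Submodule.subset_span (Or.inr ⟨a, b, hab, hbn, rfl, hc⟩)
  have Xgm : ∀ a b : ℕ, Eij F n a b - Eij F n (n-1-b) (n-1-a) = Xg F n a b (-1 : F) := by
    intro a b
    unfold Xg
    rw [neg_one_smul, ← sub_eq_add_neg]
  have Xgp : ∀ a b : ℕ, Eij F n a b + Eij F n (n-1-b) (n-1-a) = Xg F n a b (1 : F) := by
    intro a b
    unfold Xg
    rw [one_smul]
  constructor
  · -- spanning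
    intro x hx
    rw [Matrix.matrix_eq_sum_single x]
    apply Submodule.sum_mem
    intro i _
    apply Submodule.sum_mem
    intro j _
    by_cases hij : j < i
    · rw [hx i j hij, Matrix.single_zero]
      exact zero_mem _
    · have hij' : (i : ℕ) ≤ (j : ℕ) := Fin.le_def.mp (le_of_not_gt hij)
      rw [show Matrix.single i j (x i j) = x i j • Matrix.single i j (1:F) from
        by rw [Matrix.smul_single, smul_eq_mul, mul_one]]
      apply Submodule.smul_mem
      have hE : Eij F n (i : ℕ) (j : ℕ) = Matrix.single i j (1:F) := by
        unfold Eij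
        rw [dif_pos ⟨i.2, j.2⟩]
      rw [← hE]
      have h2 : (Eij F n (i:ℕ) (j:ℕ) - Eij F n (n-1-(j:ℕ)) (n-1-(i:ℕ)))
          + (Eij F n (i:ℕ) (j:ℕ) + Eij F n (n-1-(j:ℕ)) (n-1-(i:ℕ)))
          = (2:F) • Eij F n (i:ℕ) (j:ℕ) := by module
      have hsplit : Eij F n (i:ℕ) (j:ℕ) = (2⁻¹ : F) •
          ((Eij F n (i:ℕ) (j:ℕ) - Eij F n (n-1-(j:ℕ)) (n-1-(i:ℕ)))
            + (Eij F n (i:ℕ) (j:ℕ) + Eij F n (n-1-(j:ℕ)) (n-1-(i:ℕ)))) := by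
        rw [h2, smul_smul, inv_mul_cancel₀ hchar, one_smul]
      rw [hsplit]
      refine Submodule.smul_mem _ _ (add_mem ?_ ?_)
      · exact le_iSup U (dm (i:ℕ) (j:ℕ)) (memU (i:ℕ) (j:ℕ) hij' j.2 _ rfl)
      · exact le_iSup U (g * dm (i:ℕ) (j:ℕ)) (memU' (i:ℕ) (j:ℕ) hij' j.2 _ rfl)
  · -- grading
    intro c c' a ha b hb
    refine Submodule.span_induction
      (p := fun a _ => ∀ y, y ∈ U c' → ⁅a, y⁆ ∈ U (c * c')) ?_ ?_ ?_ ?_ ha b hb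
    · intro a' ha' y hy
      refine Submodule.span_induction (p := fun y _ => ⁅a', y⁆ ∈ U (c * c')) ?_ ?_ ?_ ?_ hy
      · -- core computation on generators
        intro b' hb'
        rcases ha' with ⟨i, j, hij, hjn, rfl, hda⟩ | ⟨i, j, hij, hjn, rfl, hda⟩ <;>
          rcases hb' with ⟨k, l, hkl, hln, rfl, hdb⟩ | ⟨k, l, hkl, hln, rfl, hdb⟩ <;>
          subst hda <;> subst hdb
        · -- (−,−)
          rw [Xgm i j, Xgm k l,
            Xg_key F (by omega) hjn (by omega) hln (-1) (-1) (by norm_num) (by norm_num),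
            show (-((-1:F) * -1)) = (-1:F) from by norm_num]
          refine add_mem (add_mem (sub_mem ?_ ?_) ?_) ?_
          · by_cases hc : j = k
            · rw [if_pos hc, ← Xgm i l]
              exact memU i l (by omega) hln _ (by rw [← hc, Hmul i j l hij (by omega)])
            · rw [if_neg hc]; exact zero_mem _
          · by_cases hc : l = i
            · rw [if_pos hc, ← Xgm k j]
              exact memU k j (by omega) hjn _
                (by rw [hc, Hcd i j k i, Hmul k i j (by omega) hij])
            · rw [if_neg hc]; exact zero_mem _
          · by_cases hc : j = n - 1 - l
            · rw [if_pos hc]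
              refine Submodule.smul_mem _ _ ?_
              rw [← Xgm i (n-1-k)]
              exact memU i (n-1-k) (by omega) (by omega) _
                (by rw [Hsym k l hkl hln, ← hc, Hmul i j (n-1-k) hij (by omega)])
            · rw [if_neg hc]; exact zero_mem _
          · by_cases hc : n - 1 - i = k
            · rw [if_pos hc]
              refine Submodule.smul_mem _ _ ?_
              rw [← Xgm (n-1-j) l]
              exact memU (n-1-j) l (by omega) hln _
                (by rw [Hsym i j hij hjn, hc, Hmul (n-1-j) k l (by omega) hkl])
            · rw [if_neg hc]; exact zero_mem _
        · -- (−,+)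
          rw [Xgm i j, Xgp k l,
            Xg_key F (by omega) hjn (by omega) hln (-1) 1 (by norm_num) (by norm_num),
            show (-((-1:F) * 1)) = (1:F) from by norm_num]
          refine add_mem (add_mem (sub_mem ?_ ?_) ?_) ?_
          · by_cases hc : j = k
            · rw [if_pos hc, ← Xgp i l]
              exact memU' i l (by omega) hln _ (by rw [← hc, TMG i j l hij (by omega)])
            · rw [if_neg hc]; exact zero_mem _
          · by_cases hc : l = i
            · rw [if_pos hc, ← Xgp k j]
              exact memU' k j (by omega) hjn _
                (by rw [hc, SMG i j k i, TGM k i j (by omega) hij])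
            · rw [if_neg hc]; exact zero_mem _
          · by_cases hc : j = n - 1 - l
            · rw [if_pos hc]
              refine Submodule.smul_mem _ _ ?_
              rw [← Xgp i (n-1-k)]
              exact memU' i (n-1-k) (by omega) (by omega) _
                (by rw [Hsym k l hkl hln, ← hc, TMG i j (n-1-k) hij (by omega)])
            · rw [if_neg hc]; exact zero_mem _
          · by_cases hc : n - 1 - i = k
            · rw [if_pos hc]
              refine Submodule.smul_mem _ _ ?_
              rw [← Xgp (n-1-j) l]
              exact memU' (n-1-j) l (by omega) hln _
                (by rw [Hsym i j hij hjn, hc, TMG (n-1-j) k l (by omega) hkl])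
            · rw [if_neg hc]; exact zero_mem _
        · -- (+,−)
          rw [Xgp i j, Xgm k l,
            Xg_key F (by omega) hjn (by omega) hln 1 (-1) (by norm_num) (by norm_num),
            show (-((1:F) * -1)) = (1:F) from by norm_num]
          refine add_mem (add_mem (sub_mem ?_ ?_) ?_) ?_
          · by_cases hc : j = k
            · rw [if_pos hc, ← Xgp i l]
              exact memU' i l (by omega) hln _ (by rw [← hc, TGM i j l hij (by omega)])
            · rw [if_neg hc]; exact zero_mem _
          · by_cases hc : l = i
            · rw [if_pos hc, ← Xgp k j]
              exact memU' k j (by omega) hjn _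
                (by rw [hc, SGM i j k i, TMG k i j (by omega) hij])
            · rw [if_neg hc]; exact zero_mem _
          · by_cases hc : j = n - 1 - l
            · rw [if_pos hc]
              refine Submodule.smul_mem _ _ ?_
              rw [← Xgp i (n-1-k)]
              exact memU' i (n-1-k) (by omega) (by omega) _
                (by rw [Hsym k l hkl hln, ← hc, TGM i j (n-1-k) hij (by omega)])
            · rw [if_neg hc]; exact zero_mem _
          · by_cases hc : n - 1 - i = k
            · rw [if_pos hc]
              refine Submodule.smul_mem _ _ ?_
              rw [← Xgp (n-1-j) l]
              exact memU' (n-1-j) l (by omega) hln _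
                (by rw [Hsym i j hij hjn, hc, TGM (n-1-j) k l (by omega) hkl])
            · rw [if_neg hc]; exact zero_mem _
        · -- (+,+)
          rw [Xgp i j, Xgp k l,
            Xg_key F (by omega) hjn (by omega) hln 1 1 (by norm_num) (by norm_num),
            show (-((1:F) * 1)) = (-1:F) from by norm_num]
          refine add_mem (add_mem (sub_mem ?_ ?_) ?_) ?_
          · by_cases hc : j = k
            · rw [if_pos hc, ← Xgm i l]
              exact memU i l (by omega) hln _ (by rw [← hc, TGG i j l hij (by omega)])
            · rw [if_neg hc]; exact zero_mem _
          · by_cases hc : l = i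
            · rw [if_pos hc, ← Xgm k j]
              exact memU k j (by omega) hjn _
                (by rw [hc, SGG i j k i, TGG k i j (by omega) hij])
            · rw [if_neg hc]; exact zero_mem _
          · by_cases hc : j = n - 1 - l
            · rw [if_pos hc]
              refine Submodule.smul_mem _ _ ?_
              rw [← Xgm i (n-1-k)]
              exact memU i (n-1-k) (by omega) (by omega) _
                (by rw [Hsym k l hkl hln, ← hc, TGG i j (n-1-k) hij (by omega)])
            · rw [if_neg hc]; exact zero_mem _
          · by_cases hc : n - 1 - i = k
            · rw [if_pos hc]
              refine Submodule.smul_mem _ _ ?_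
              rw [← Xgm (n-1-j) l]
              exact memU (n-1-j) l (by omega) hln _
                (by rw [Hsym i j hij hjn, hc, TGG (n-1-j) k l (by omega) hkl])
            · rw [if_neg hc]; exact zero_mem _
      · show ⁅a', (0 : Matrix (Fin n) (Fin n) F)⁆ ∈ U (c * c')
        rw [Ring.lie_def, mul_zero, zero_mul, sub_zero]; exact zero_mem _
      · intro u v _ _ pu pv
        show ⁅a', u + v⁆ ∈ U (c * c')
        rw [show ⁅a', u + v⁆ = ⁅a', u⁆ + ⁅a', v⁆ from by
          rw [Ring.lie_def, Ring.lie_def, Ring.lie_def]; noncomm_ring]; exact add_mem pu pv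
      · intro r u _ pu
        show ⁅a', r • u⁆ ∈ U (c * c')
        rw [show ⁅a', r • u⁆ = r • ⁅a', u⁆ from by
          rw [Ring.lie_def, Ring.lie_def, mul_smul_comm, smul_mul_assoc, smul_sub]]
        exact Submodule.smul_mem _ _ pu
    · intro y _
      rw [Ring.lie_def, mul_zero, zero_mul, sub_zero]; exact zero_mem _
    · intro u v _ _ pu pv y hy
      rw [show ⁅u + v, y⁆ = ⁅u, y⁆ + ⁅v, y⁆ from by
        rw [Ring.lie_def, Ring.lie_def, Ring.lie_def]; noncomm_ring]; exact add_mem (pu y hy) (pv y hy)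
    · intro r u _ pu y hy
      rw [show ⁅r • u, y⁆ = r • ⁅u, y⁆ from by
        rw [Ring.lie_def, Ring.lie_def, mul_smul_comm, smul_mul_assoc, smul_sub]]
      exact Submodule.smul_mem _ _ (pu y hy)
end

section
/- Let F be a field, G a group, n ≥ 2, and Γ a G-grading on the Lie algebra UT_n^(-) in which, for every 1 ≤ i ≤ j ≤ n, the matrix unit e_{ij} is homogeneous. Consider the induced grading on the quotient U = UT_n^(-)/F·I. Then a multilinear G-graded Lie polynomial is a graded identity of U if and only if it is a graded identity of (UT_n^(-), Γ') where Γ' is the elementary grading with deg e_{ii} replaced by 1 and deg I = 1 (i.e. changing only the degree of the identity matrix does not change the graded identities of the central quotient). -/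
/-- Formal Lie monomials (bracket words) in `m` variables. -/
inductive LieWord (m : ℕ) where
  | var : Fin m → LieWord m
  | br : LieWord m → LieWord m → LieWord m

/-- Evaluation of a Lie word in a Lie ring under a substitution `v`. -/
def LieWord.eval {m : ℕ} {L : Type*} [LieRing L] (v : Fin m → L) : LieWord m → L
  | .var k => v k
  | .br w₁ w₂ => ⁅w₁.eval v, w₂.eval v⁆

/-- The multiset of variables occurring in a Lie word (with multiplicity). -/
def LieWord.vars {m : ℕ} : LieWord m → Multiset (Fin m)
  | .var k => {k}
  | .br w₁ w₂ => w₁.vars + w₂.vars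

/-- Evaluation of a formal linear combination of Lie words (a Lie polynomial). -/
def evalPoly {m : ℕ} {F L : Type*} [Field F] [LieRing L] [LieAlgebra F L]
    (P : List (F × LieWord m)) (v : Fin m → L) : L :=
  (P.map (fun p => p.1 • p.2.eval v)).sum

attribute [local instance] LieRing.ofAssociativeRing

namespace Stmt19Aux

open Matrix

lemma vars_card_pos {m : ℕ} : ∀ w : LieWord m, 0 < Multiset.card w.vars
  | .var k => by simp [LieWord.vars]
  | .br w₁ w₂ => by
      have := vars_card_pos w₁
      simp only [LieWord.vars, Multiset.card_add]
      omega

variable {F : Type*} [Field F] {n : ℕ}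

/-- upper triangular -/
def UT (x : Matrix (Fin n) (Fin n) F) : Prop := ∀ i j : Fin n, j < i → x i j = 0

lemma UT.mul {a b : Matrix (Fin n) (Fin n) F} (ha : UT a) (hb : UT b) : UT (a * b) := by
  intro i j hji
  rw [Matrix.mul_apply]
  refine Finset.sum_eq_zero fun k _ => ?_
  rcases lt_or_ge k i with h | h
  · rw [ha i k h, zero_mul]
  · rw [hb k j (lt_of_lt_of_le hji h), mul_zero]

lemma UT.lie {a b : Matrix (Fin n) (Fin n) F} (ha : UT a) (hb : UT b) : UT ⁅a, b⁆ := by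
  intro i j hji
  rw [Ring.lie_def, Matrix.sub_apply, ha.mul hb i j hji, hb.mul ha i j hji, sub_zero]

lemma lie_diag_zero {a b : Matrix (Fin n) (Fin n) F} (ha : UT a) (hb : UT b) (i : Fin n) :
    (⁅a, b⁆ : Matrix (Fin n) (Fin n) F) i i = 0 := by
  have h1 : ∀ x y : Matrix (Fin n) (Fin n) F, UT x → UT y →
      (x * y) i i = x i i * y i i := by
    intro x y hx hy
    rw [Matrix.mul_apply]
    refine Finset.sum_eq_single i (fun k _ hk => ?_) (by simp)
    rcases lt_or_gt_of_ne hk with h | h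
    · rw [hx i k h, zero_mul]
    · rw [hy k i h, mul_zero]
  rw [Ring.lie_def, Matrix.sub_apply, h1 a b ha hb, h1 b a hb ha, mul_comm, sub_self]

lemma eval_UT {m : ℕ} {v : Fin m → Matrix (Fin n) (Fin n) F} (hv : ∀ k, UT (v k)) :
    ∀ w : LieWord m, UT (w.eval v)
  | .var k => hv k
  | .br w₁ w₂ => (eval_UT hv w₁).lie (eval_UT hv w₂)

lemma eval_central_shift {m : ℕ} (v u : Fin m → Matrix (Fin n) (Fin n) F)
    (h : ∀ k, ∃ c : F, v k = u k + c • 1) :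
    ∀ w : LieWord m, ∃ c : F, w.eval v = w.eval u + c • 1
  | .var k => h k
  | .br w₁ w₂ => by
    obtain ⟨c₁, h₁⟩ := eval_central_shift v u h w₁
    obtain ⟨c₂, h₂⟩ := eval_central_shift v u h w₂
    refine ⟨0, ?_⟩
    have l1 : ∀ (x : Matrix (Fin n) (Fin n) F) (c : F), ⁅x, c • (1 : Matrix (Fin n) (Fin n) F)⁆ = 0 := by
      intro x c
      rw [Ring.lie_def, mul_smul_comm, smul_mul_assoc, mul_one, one_mul, sub_self]
    have l2 : ∀ (x : Matrix (Fin n) (Fin n) F) (c : F), ⁅c • (1 : Matrix (Fin n) (Fin n) F), x⁆ = 0 := by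
      intro x c
      rw [Ring.lie_def, mul_smul_comm, smul_mul_assoc, mul_one, one_mul, sub_self]
    show ⁅w₁.eval v, w₂.eval v⁆ = ⁅w₁.eval u, w₂.eval u⁆ + (0:F) • 1
    rw [h₁, h₂, add_lie, lie_add, lie_add, l1, l2, l1]
    simp

lemma evalPoly_shift {m : ℕ} (P : List (F × LieWord m))
    (v u : Fin m → Matrix (Fin n) (Fin n) F)
    (h : ∀ k, ∃ c : F, v k = u k + c • 1) :
    ∃ c : F, evalPoly P v = evalPoly P u + c • 1 := by
  induction P with
  | nil => exact ⟨0, by simp [evalPoly]⟩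
  | cons p P ih =>
    obtain ⟨c, hc⟩ := ih
    obtain ⟨c', hc'⟩ := eval_central_shift v u h p.2
    refine ⟨p.1 * c' + c, ?_⟩
    simp only [evalPoly, List.map_cons, List.sum_cons] at hc ⊢
    rw [hc, hc', smul_add, smul_smul, add_smul]
    abel

lemma mem_unique {R M ι : Type*} [Ring R] [AddCommGroup M] [Module R M]
    {U : ι → Submodule R M} (hind : iSupIndep U) {a b : ι} {x : M}
    (ha : x ∈ U a) (hb : x ∈ U b) (hx : x ≠ 0) : a = b := by
  by_contra hab
  exact hx (Submodule.disjoint_def.mp (hind a) x ha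
    (Submodule.mem_iSup_of_mem b (Submodule.mem_iSup_of_mem (Ne.symm hab) hb)))

lemma list_sum_entry {L : List (Matrix (Fin n) (Fin n) F)} {i j : Fin n}
    (h : ∀ A ∈ L, A i j = 0) : L.sum i j = 0 := by
  induction L with
  | nil => simp
  | cons A L ih =>
    rw [List.sum_cons, Matrix.add_apply, h A (List.mem_cons_self),
      ih (fun B hB => h B (List.mem_cons_of_mem A hB)), add_zero]

lemma evalPoly_const_var {m : ℕ} (P : List (F × LieWord m)) (k0 : Fin m)
    (hall : ∀ p ∈ P, p.2 = LieWord.var k0) (v : Fin m → Matrix (Fin n) (Fin n) F) :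
    evalPoly P v = (P.map Prod.fst).sum • v k0 := by
  induction P with
  | nil => simp [evalPoly]
  | cons p P ih =>
    simp only [evalPoly, List.map_cons, List.sum_cons] at ih ⊢
    rw [ih (fun q hq => hall q (List.mem_cons_of_mem p hq)),
      hall p (List.mem_cons_self), add_smul]
    rfl

end Stmt19Aux

/-- let `Γ` (given by `U`) be a `G`-grading on `UT_n^(-)` in which
every matrix unit `e_{ij}` (`i ≤ j`) is homogeneous, of degree `dg i j`. A
multilinear `G`-graded Lie polynomial `P`, with variable degrees `d`, is a graded
identity of the central quotient `UT_n^(-)/F·I` (with the induced grading: values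
of a variable of degree `k` range over `U (d k) ⊔ F·I` and the evaluation must be
central) if and only if it is a graded identity of `(UT_n^(-), Γ')`, where `Γ'` is
the elementary grading with `deg e_{ii}` replaced by `1` and `deg I = 1`. -/
theorem stmt19 (F G : Type*) [Field F] [Group G] (n : ℕ) (hn : 2 ≤ n)
    (U : G → Submodule F (Matrix (Fin n) (Fin n) F))
    (hUT : ∀ g, ∀ x ∈ U g, ∀ i j : Fin n, j < i → x i j = 0)
    (hcover : ∀ x : Matrix (Fin n) (Fin n) F,
      (∀ i j : Fin n, j < i → x i j = 0) → x ∈ ⨆ g, U g)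
    (hind : iSupIndep U)
    (hbr : ∀ g h : G, ∀ x ∈ U g, ∀ y ∈ U h, ⁅x, y⁆ ∈ U (g * h))
    (dg : Fin n → Fin n → G)
    (hdg : ∀ i j : Fin n, i ≤ j → Matrix.single i j 1 ∈ U (dg i j))
    (m : ℕ) (P : List (F × LieWord m))
    (hmulti : ∀ p ∈ P, p.2.vars = (Finset.univ.val : Multiset (Fin m)))
    (d : Fin m → G) :
    let Z : Submodule F (Matrix (Fin n) (Fin n) F) :=
      Submodule.span F {(1 : Matrix (Fin n) (Fin n) F)}
    let U' : G → Submodule F (Matrix (Fin n) (Fin n) F) := fun h =>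
      Submodule.span F {x | ∃ i j : Fin n, i ≤ j ∧ x = Matrix.single i j 1 ∧
        (if i = j then 1 else dg i j) = h}
    (∀ v : Fin m → Matrix (Fin n) (Fin n) F,
        (∀ k, v k ∈ U (d k) ⊔ Z) → evalPoly P v ∈ Z)
      ↔ (∀ v : Fin m → Matrix (Fin n) (Fin n) F,
        (∀ k, v k ∈ U' (d k)) → evalPoly P v = 0) := by
  intro Z U'
  classical
  have hi0 : (0 : ℕ) < n := by omega
  have hi1 : (1 : ℕ) < n := by omega
  set i0 : Fin n := ⟨0, hi0⟩ with hi0def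
  set i1 : Fin n := ⟨1, hi1⟩ with hi1def
  have hne01 : i0 ≠ i1 := by
    rw [hi0def, hi1def, Ne, Fin.mk.injEq]
    omega
  -- diagonal matrix units have degree 1
  have hdiag : ∀ i : Fin n, dg i i = 1 := by
    intro i
    have hexist : ∃ j : Fin n, i < j ∨ j < i := by
      by_cases h0 : (i : ℕ) = 0
      · refine ⟨⟨1, hi1⟩, Or.inl ?_⟩
        rw [Fin.lt_def]
        show (i : ℕ) < 1
        omega
      · refine ⟨⟨0, hi0⟩, Or.inr ?_⟩
        rw [Fin.lt_def]
        show (0 : ℕ) < (i : ℕ)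
        omega
    obtain ⟨j, hj | hj⟩ := hexist
    · have h1 : Matrix.single i j (1:F) ∈ U (dg i j) := hdg i j hj.le
      have h2 : ⁅Matrix.single i i (1:F), Matrix.single i j (1:F)⁆
          ∈ U (dg i i * dg i j) := hbr _ _ _ (hdg i i le_rfl) _ h1
      have h3 : ⁅Matrix.single i i (1:F), Matrix.single i j (1:F)⁆
          = Matrix.single i j (1:F) := by
        rw [Ring.lie_def, Matrix.single_mul_single_same,
          Matrix.single_mul_single_of_ne (h := hj.ne'), one_mul, sub_zero]
      rw [h3] at h2
      have hnz : Matrix.single i j (1:F) ≠ 0 := by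
        intro hzero
        have := congrFun (congrFun hzero i) j
        rw [Matrix.single_apply_same] at this
        simp at this
      exact mul_eq_right.mp (Stmt19Aux.mem_unique hind h2 h1 hnz)
    · have h1 : Matrix.single j i (1:F) ∈ U (dg j i) := hdg j i hj.le
      have h2 : ⁅Matrix.single i i (1:F), Matrix.single j i (1:F)⁆
          ∈ U (dg i i * dg j i) := hbr _ _ _ (hdg i i le_rfl) _ h1
      have h3 : ⁅Matrix.single i i (1:F), Matrix.single j i (1:F)⁆
          = -(Matrix.single j i (1:F)) := by
        rw [Ring.lie_def, Matrix.single_mul_single_of_ne (h := hj.ne'),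
          Matrix.single_mul_single_same, one_mul, zero_sub]
      rw [h3] at h2
      have hnz : -(Matrix.single j i (1:F)) ≠ 0 := by
        intro hzero
        rw [neg_eq_zero] at hzero
        have := congrFun (congrFun hzero j) i
        rw [Matrix.single_apply_same] at this
        simp at this
      exact mul_eq_right.mp
        (Stmt19Aux.mem_unique hind h2 (Submodule.neg_mem _ h1) hnz)
  -- U' ≤ U
  have hU'leU : ∀ g, U' g ≤ U g := by
    intro g
    apply Submodule.span_le.mpr
    rintro x ⟨i, j, hij, rfl, hdeg⟩
    by_cases h : i = j
    · subst h
      rw [if_pos rfl] at hdeg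
      have := hdg i i le_rfl
      rwa [hdiag i, hdeg] at this
    · rw [if_neg h] at hdeg
      have := hdg i j hij
      rwa [hdeg] at this
  -- upper triangular matrices lie in the span of the U'
  have hcov' : ∀ x : Matrix (Fin n) (Fin n) F, (∀ i j : Fin n, j < i → x i j = 0) →
      x ∈ ⨆ h, U' h := by
    intro x hx
    rw [Matrix.matrix_eq_sum_single x]
    refine Submodule.sum_mem _ fun i _ => Submodule.sum_mem _ fun j _ => ?_
    rcases lt_or_ge j i with h | h
    · rw [hx i j h, Matrix.single_zero]
      exact Submodule.zero_mem _
    · have h1 : Matrix.single i j (x i j) = (x i j) • Matrix.single i j 1 := by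
        rw [Matrix.smul_single, smul_eq_mul, mul_one]
      rw [h1]
      exact Submodule.smul_mem _ _ (Submodule.mem_iSup_of_mem (if i = j then 1 else dg i j)
        (Submodule.subset_span ⟨i, j, h, rfl, rfl⟩))
  -- U ≤ U'
  have hUleU' : ∀ g, U g ≤ U' g := by
    intro g x hx
    have hx' : x ∈ ⨆ h, U' h := hcov' x (hUT g x hx)
    rw [Submodule.mem_iSup_iff_exists_finsupp] at hx'
    obtain ⟨f, hf, hsum⟩ := hx'
    have key : x - f g = ∑ h ∈ f.support.erase g, f h := by
      rw [← hsum, Finsupp.sum]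
      by_cases hg : g ∈ f.support
      · rw [← Finset.add_sum_erase _ _ hg]
        abel
      · rw [Finsupp.notMem_support_iff.mp hg, sub_zero, Finset.erase_eq_of_notMem hg]
    have hrest : x - f g ∈ ⨆ h, ⨆ _ : h ≠ g, U h := by
      rw [key]
      exact Submodule.sum_mem _ fun h hh =>
        Submodule.mem_iSup_of_mem h (Submodule.mem_iSup_of_mem (Finset.ne_of_mem_erase hh)
          (hU'leU h (hf h)))
    have h0 : x - f g = 0 :=
      Submodule.disjoint_def.mp (hind g) _ (sub_mem hx (hU'leU g (hf g))) hrest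
    rw [sub_eq_zero] at h0
    rw [h0]
    exact hf g
  constructor
  · -- identity of the quotient → identity of (UT_n, Γ')
    intro hL v hv
    have hvU : ∀ k, v k ∈ U (d k) := fun k => hU'leU _ (hv k)
    have hvUT : ∀ k, Stmt19Aux.UT (v k) := fun k i j hij => hUT _ _ (hvU k) i j hij
    obtain ⟨t, ht⟩ := Submodule.mem_span_singleton.mp
      (hL v fun k => Submodule.mem_sup_left (hvU k))
    by_cases hcase : ∀ p ∈ P, ∃ w1 w2, p.2 = LieWord.br w1 w2
    · -- every monomial is a genuine bracket: the (0,0) entry of the value is 0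
      have h00 : evalPoly P v i0 i0 = 0 := by
        apply Stmt19Aux.list_sum_entry
        intro A hA
        rw [List.mem_map] at hA
        obtain ⟨p, hp, rfl⟩ := hA
        obtain ⟨w1, w2, hw⟩ := hcase p hp
        rw [hw]
        show (p.1 • (LieWord.br w1 w2).eval v) i0 i0 = 0
        rw [Matrix.smul_apply]
        show p.1 • (⁅w1.eval v, w2.eval v⁆ : Matrix (Fin n) (Fin n) F) i0 i0 = 0
        rw [Stmt19Aux.lie_diag_zero (Stmt19Aux.eval_UT hvUT w1) (Stmt19Aux.eval_UT hvUT w2),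
          smul_zero]
      have ht0 : t = 0 := by
        have h := congrFun (congrFun ht i0) i0
        rw [h00] at h
        simpa using h
      rw [← ht, ht0, zero_smul]
    · push_neg at hcase
      obtain ⟨p0, hp0, hvarp⟩ := hcase
      obtain ⟨k0, hk0⟩ : ∃ k0, p0.2 = LieWord.var k0 := by
        cases h : p0.2 with
        | var k => exact ⟨k, rfl⟩
        | br w1 w2 => exact absurd h (hvarp w1 w2)
      have hksing : (Finset.univ.val : Multiset (Fin m)) = {k0} := by
        rw [← hmulti p0 hp0, hk0]
        rfl
      have hallk : ∀ k : Fin m, k = k0 := by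
        intro k
        have hk : k ∈ (Finset.univ.val : Multiset (Fin m)) := Finset.mem_val.mpr (Finset.mem_univ k)
        rw [hksing] at hk
        exact Multiset.mem_singleton.mp hk
      have hall : ∀ p ∈ P, p.2 = LieWord.var k0 := by
        intro p hp
        cases h : p.2 with
        | var k => rw [hallk k]
        | br w1 w2 =>
          exfalso
          have hcard := hmulti p hp
          rw [h] at hcard
          have h1 := Stmt19Aux.vars_card_pos (m := m) w1
          have h2 := Stmt19Aux.vars_card_pos (m := m) w2
          have hcc : Multiset.card ((LieWord.br w1 w2).vars) = 1 := by
            rw [hcard, hksing]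
            simp
          simp only [LieWord.vars, Multiset.card_add] at hcc
          omega
      have hev : evalPoly P v = (P.map Prod.fst).sum • v k0 :=
        Stmt19Aux.evalPoly_const_var P k0 hall v
      set c : F := (P.map Prod.fst).sum with hcdef
      by_cases hd : d k0 = 1
      · -- substitute e₀₀ to kill the total coefficient
        have he : Matrix.single i0 i0 (1:F) ∈ U' (d k0) := by
          rw [hd]
          exact Submodule.subset_span ⟨i0, i0, le_rfl, rfl, by simp⟩
        have hsub := hL (fun _ => Matrix.single i0 i0 1)
          (fun k => Submodule.mem_sup_left (hU'leU _ (by rw [hallk k]; exact he)))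
        obtain ⟨s, hs⟩ := Submodule.mem_span_singleton.mp hsub
        rw [Stmt19Aux.evalPoly_const_var P k0 hall _] at hs
        have e1 : Matrix.single i0 i0 (1:F) i1 i1 = 0 :=
          Matrix.single_apply_of_ne _ _ _ _ _ (fun hh => hne01 hh.1)
        have hs0 : s = 0 := by
          have h := congrFun (congrFun hs i1) i1
          rw [Matrix.smul_apply, Matrix.smul_apply, e1, Matrix.one_apply_eq] at h
          simpa using h
        have hc0 : c = 0 := by
          have h := congrFun (congrFun hs i0) i0
          rw [hs0, Matrix.smul_apply, Matrix.smul_apply,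
            Matrix.single_apply_same, Matrix.one_apply_eq] at h
          simpa using h.symm
        rw [hev, hc0, zero_smul]
      · -- the degree is not 1, so values have zero diagonal
        have hdiag0 : (v k0) i0 i0 = 0 := by
          refine Submodule.span_induction (p := fun x _ => x i0 i0 = 0) ?_ rfl ?_ ?_ (hv k0)
          · rintro x ⟨i, j, hij, rfl, hdeg⟩
            by_cases h : i = j
            · rw [if_pos h] at hdeg
              exact absurd hdeg.symm hd
            · exact Matrix.single_apply_of_ne _ _ _ _ _ (by
                rintro ⟨rfl, rfl⟩
                exact h rfl)
          · intro x y _ _ hx hy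
            rw [Matrix.add_apply, hx, hy, add_zero]
          · intro a x _ hx
            rw [Matrix.smul_apply, hx, smul_zero]
        have ht' : t • (1 : Matrix (Fin n) (Fin n) F) = c • v k0 := by rw [ht, hev]
        have ht0 : t = 0 := by
          have h := congrFun (congrFun ht' i0) i0
          rw [Matrix.smul_apply, Matrix.smul_apply, hdiag0, Matrix.one_apply_eq] at h
          simpa using h
        rw [hev, ← ht', ht0, zero_smul]
  · -- identity of (UT_n, Γ') → identity of the quotient
    intro hR v hv
    have hdec : ∀ k, ∃ y ∈ U (d k), ∃ z ∈ Z, y + z = v k :=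
      fun k => Submodule.mem_sup.mp (hv k)
    choose u hu z hz hsum using hdec
    have hshift : ∀ k, ∃ c : F, v k = u k + c • 1 := by
      intro k
      obtain ⟨c, hc⟩ := Submodule.mem_span_singleton.mp (hz k)
      exact ⟨c, by rw [← hsum k, hc]⟩
    obtain ⟨c, hc⟩ := Stmt19Aux.evalPoly_shift P v u hshift
    rw [hc, hR u (fun k => hUleU' _ (hu k)), zero_add]
    exact Submodule.smul_mem _ _ (Submodule.mem_span_singleton_self 1)
end
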